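/- Let |GHZ_n⟩ = (|0⟩^{⊗n} + |1⟩^{⊗n})/√2. For any biseparable (2-separable) n-qubit state ρ, the fidelity satisfies ⟨GHZ_n|ρ|GHZ_n⟩ ≤ 1/2. Consequently, W = (1/2)I − |GHZ_n⟩⟨GHZ_n| satisfies Tr(Wρ) ≥ 0 for all biseparable ρ. -/

import Mathlib

open ComplexOrder

/-- Amplitudes of the `n`-qubit GHZ state `(|0…0⟩ + |1…1⟩)/√2`. -/
noncomputable def ghzVec (n : ℕ) (x : Fin n → Fin 2) : ℂ :=
  if (∀ i, x i = 0) ∨ (∀ i, x i = 1) then (((Real.sqrt 2)⁻¹ : ℝ) : ℂ) else 0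

/-- The projector `|GHZ_n⟩⟨GHZ_n|`. -/
noncomputable def ghzProj (n : ℕ) : Matrix (Fin n → Fin 2) (Fin n → Fin 2) ℂ :=
  Matrix.of fun f g => ghzVec n f * star (ghzVec n g)

/-- Tensor product of states of the groups of qubits given by the partition `P`. -/
noncomputable def prodState {n k : ℕ} (P : Fin n → Fin k)
    (ρs : ∀ j : Fin k,
      Matrix ({v : Fin n // P v = j} → Fin 2) ({v : Fin n // P v = j} → Fin 2) ℂ) :
    Matrix (Fin n → Fin 2) (Fin n → Fin 2) ℂ :=
  Matrix.of fun f g => ∏ j, ρs j (fun v => f v.1) (fun v => g v.1)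

section helpers

lemma star_ghzVec (n : ℕ) (f : Fin n → Fin 2) : star (ghzVec n f) = ghzVec n f := by
  unfold ghzVec
  split_ifs <;> simp

lemma ghz_sum {n : ℕ} (hn : 0 < n) (h : (Fin n → Fin 2) → ℂ) :
    ∑ f, ghzVec n f * h f
      = (((Real.sqrt 2)⁻¹ : ℝ) : ℂ) * (h (fun _ => 0) + h (fun _ => 1)) := by
  classical
  set a : Fin n → Fin 2 := fun _ => 0 with ha
  set b : Fin n → Fin 2 := fun _ => 1 with hb
  have hab : a ≠ b := by
    intro hc
    have := congrFun hc ⟨0, hn⟩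
    simp [ha, hb] at this
  have hterm : ∀ f, ghzVec n f * h f
      = (if f = a then (((Real.sqrt 2)⁻¹ : ℝ) : ℂ) * h f else 0)
        + (if f = b then (((Real.sqrt 2)⁻¹ : ℝ) : ℂ) * h f else 0) := by
    intro f
    by_cases h1 : f = a
    · subst h1
      rw [if_pos rfl, if_neg hab]
      have : ghzVec n a = (((Real.sqrt 2)⁻¹ : ℝ) : ℂ) := by
        unfold ghzVec
        rw [if_pos (Or.inl fun i => rfl)]
      rw [this, add_zero]
    · by_cases h2 : f = b
      · subst h2
        rw [if_neg h1, if_pos rfl]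
        have : ghzVec n b = (((Real.sqrt 2)⁻¹ : ℝ) : ℂ) := by
          unfold ghzVec
          rw [if_pos (Or.inr fun i => rfl)]
        rw [this, zero_add]
      · rw [if_neg h1, if_neg h2]
        have : ghzVec n f = 0 := by
          unfold ghzVec
          rw [if_neg]
          rintro (hc | hc)
          · exact h1 (funext hc)
          · exact h2 (funext hc)
        rw [this, zero_mul, add_zero]
  simp only [hterm]
  rw [Finset.sum_add_distrib, Finset.sum_ite_eq', Finset.sum_ite_eq']
  simp [mul_add]

lemma trace_ghz_mul {n : ℕ} (hn : 0 < n) (σ : Matrix (Fin n → Fin 2) (Fin n → Fin 2) ℂ) :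
    (ghzProj n * σ).trace
      = (1/2 : ℂ) * (σ (fun _ => 0) (fun _ => 0) + σ (fun _ => 0) (fun _ => 1)
          + σ (fun _ => 1) (fun _ => 0) + σ (fun _ => 1) (fun _ => 1)) := by
  classical
  have h1 : (ghzProj n * σ).trace
      = ∑ f, ghzVec n f * ∑ g, ghzVec n g * σ g f := by
    rw [Matrix.trace]
    congr 1
    funext f
    rw [Matrix.diag_apply, Matrix.mul_apply, Finset.mul_sum]
    congr 1
    funext g
    simp only [ghzProj, Matrix.of_apply, star_ghzVec]
    ring
  rw [h1]
  rw [ghz_sum hn]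
  rw [ghz_sum hn, ghz_sum hn]
  have hc : (((Real.sqrt 2)⁻¹ : ℝ) : ℂ) * (((Real.sqrt 2)⁻¹ : ℝ) : ℂ) = (1/2 : ℂ) := by
    rw [← Complex.ofReal_mul, ← mul_inv, Real.mul_self_sqrt (by norm_num)]
    norm_num
  ring_nf
  ring_nf at hc
  rw [hc]
  ring

end helpers

section bipart

variable {n : ℕ} (P : Fin n → Fin 2)

/-- Splitting qubits according to a bipartition. -/
def bipartEquiv : (Fin n → Fin 2) ≃ (({v : Fin n // P v = 0} → Fin 2) × ({v : Fin n // P v = 1} → Fin 2)) where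
  toFun f := (fun v => f v.1, fun v => f v.1)
  invFun ab := fun v => if h : P v = 0 then ab.1 ⟨v, h⟩ else ab.2 ⟨v, Fin.eq_one_of_ne_zero _ h⟩
  left_inv f := by
    funext v
    dsimp
    split_ifs <;> rfl
  right_inv ab := by
    ext v
    · dsimp
      rw [dif_pos v.2]
    · dsimp
      rw [dif_neg (by rw [v.2]; exact one_ne_zero)]

lemma prodState_apply (ρs : ∀ j : Fin 2,
      Matrix ({v : Fin n // P v = j} → Fin 2) ({v : Fin n // P v = j} → Fin 2) ℂ)
    (f g : Fin n → Fin 2) :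
    prodState P ρs f g = ρs 0 (fun v => f v.1) (fun v => g v.1)
      * ρs 1 (fun v => f v.1) (fun v => g v.1) := by
  simp [prodState, Fin.prod_univ_two]

lemma prodState_trace (ρs : ∀ j : Fin 2,
      Matrix ({v : Fin n // P v = j} → Fin 2) ({v : Fin n // P v = j} → Fin 2) ℂ) :
    (prodState P ρs).trace = (ρs 0).trace * (ρs 1).trace := by
  classical
  rw [Matrix.trace]
  have := Fintype.sum_equiv (bipartEquiv P)
    (fun f => (prodState P ρs).diag f)
    (fun ab => ρs 0 ab.1 ab.1 * ρs 1 ab.2 ab.2)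
    (fun f => by simp [Matrix.diag_apply, prodState_apply, bipartEquiv])
  rw [this, Fintype.sum_prod_type]
  rw [Matrix.trace, Matrix.trace, Finset.sum_mul_sum]
  simp [Matrix.diag_apply]

end bipart

section psd
variable {X : Type*} [Fintype X] [DecidableEq X]

lemma sum_ite_pair {i j : X} (hij : i ≠ j) (A B : X → ℂ) :
    ∑ l, (if l = i then A l else if l = j then B l else 0) = A i + B j := by
  classical
  have : ∀ l, (if l = i then A l else if l = j then B l else 0)
      = (if l = i then A l else 0) + (if l = j then B l else 0) := by
    intro l
    by_cases h1 : l = i <;> by_cases h2 : l = j <;> simp_all [h1]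
  simp only [this]
  rw [Finset.sum_add_distrib, Finset.sum_ite_eq', Finset.sum_ite_eq']
  simp

lemma psd_diag {M : Matrix X X ℂ} (hM : M.PosSemidef) (i : X) :
    0 ≤ (M i i).re ∧ (M i i).im = 0 := by
  have h := hM.dotProduct_mulVec_nonneg (Pi.single i 1)
  rw [Matrix.mulVec_single] at h
  simp only [dotProduct, Pi.star_apply, Pi.single_apply, apply_ite star, star_one,
    star_zero, ite_mul, one_mul, zero_mul, mul_one] at h
  rw [Finset.sum_ite_eq'] at h
  simp at h
  rw [Complex.le_def] at h
  exact ⟨h.1, h.2.symm⟩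

lemma psd_entry {M : Matrix X X ℂ} (hM : M.PosSemidef) {i j : X} (hij : i ≠ j) :
    Complex.normSq (M i j) ≤ (M i i).re * (M j j).re := by
  have hdi := psd_diag hM i
  have hdj := psd_diag hM j
  have hz : M j i = starRingEnd ℂ (M i j) := by
    conv_lhs => rw [← hM.isHermitian]
    simp [Matrix.conjTranspose_apply]
  have hMii : M i i = ((M i i).re : ℂ) := Complex.ext rfl (by simp [hdi.2])
  have hMjj : M j j = ((M j j).re : ℂ) := Complex.ext rfl (by simp [hdj.2])
  set z := M i j with hzdef
  set nz := Complex.normSq z with hnz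
  have key : ∀ t : ℝ, 0 ≤ (M i i).re * (t * t) + (-2 * nz) * t + nz * (M j j).re := by
    intro t
    set x : X → ℂ := fun l => if l = i then (t : ℂ) else if l = j then -(starRingEnd ℂ z) else 0
      with hx
    have h := hM.dotProduct_mulVec_nonneg x
    have hmv : ∀ l, M.mulVec x l = M l i * (t : ℂ) + M l j * (-(starRingEnd ℂ z)) := by
      intro l
      simp only [Matrix.mulVec, dotProduct, hx, mul_ite, mul_zero]
      exact sum_ite_pair hij _ _
    have hdp : dotProduct (star x) (M.mulVec x)
        = starRingEnd ℂ (t : ℂ) * (M i i * (t : ℂ) + M i j * (-(starRingEnd ℂ z)))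
          + starRingEnd ℂ (-(starRingEnd ℂ z)) * (M j i * (t : ℂ) + M j j * (-(starRingEnd ℂ z))) := by
      simp only [dotProduct, Pi.star_apply, hx, apply_ite (star : ℂ → ℂ), star_zero,
        ite_mul, zero_mul]
      rw [sum_ite_pair hij]
      rw [← hx]
      simp only [hmv, Complex.star_def]
    rw [hdp] at h
    rw [hz, hMii, hMjj] at h
    have : starRingEnd ℂ ((t:ℂ)) * ((((M i i).re : ℝ):ℂ) * (t : ℂ) + z * (-(starRingEnd ℂ z)))
          + starRingEnd ℂ (-(starRingEnd ℂ z)) * (starRingEnd ℂ z * (t : ℂ) + (((M j j).re : ℝ):ℂ) * (-(starRingEnd ℂ z)))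
        = (((M i i).re * (t * t) + (-2 * nz) * t + nz * (M j j).re : ℝ) : ℂ) := by
      rw [map_neg, Complex.conj_conj, Complex.conj_ofReal]
      push_cast [hnz]
      rw [← Complex.mul_conj]
      ring
    rw [this] at h
    exact (Complex.zero_le_real).mp h
  have hd := discrim_le_zero key
  rw [discrim] at hd
  have hnz0 : 0 ≤ nz := Complex.normSq_nonneg z
  rcases eq_or_lt_of_le hnz0 with h0 | hpos
  · rw [← h0]
    exact mul_nonneg hdi.1 hdj.1
  · nlinarith [hd, hpos]

lemma psd_two_diag_le {M : Matrix X X ℂ} (hM : M.PosSemidef) (htr : M.trace = 1)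
    {i j : X} (hij : i ≠ j) : (M i i).re + (M j j).re ≤ 1 := by
  have h1 : ∑ l, (M l l).re = 1 := by
    have := congrArg Complex.re htr
    rw [Matrix.trace, Complex.re_sum] at this
    simpa [Matrix.diag_apply] using this
  have h2 : (M i i).re + (M j j).re = ∑ l ∈ ({i, j} : Finset X), (M l l).re :=
    (Finset.sum_pair (f := fun l => (M l l).re) hij).symm
  rw [h2, ← h1]
  exact Finset.sum_le_sum_of_subset_of_nonneg (Finset.subset_univ _)
    (fun l _ _ => (psd_diag hM l).1)

end psd

lemma key_term {n : ℕ} (P : Fin n → Fin 2) (hP : Function.Surjective P)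
    (ρs : ∀ j : Fin 2,
      Matrix ({v : Fin n // P v = j} → Fin 2) ({v : Fin n // P v = j} → Fin 2) ℂ)
    (h0 : (ρs 0).PosSemidef) (t0 : (ρs 0).trace = 1)
    (h1 : (ρs 1).PosSemidef) (t1 : (ρs 1).trace = 1) :
    ((ghzProj n * prodState P ρs).trace).re ≤ 1 / 2 := by
  classical
  obtain ⟨v0, hv0⟩ := hP 0
  obtain ⟨v1, hv1⟩ := hP 1
  have hn : 0 < n := v0.pos
  set i0 : {v : Fin n // P v = 0} → Fin 2 := fun _ => 0 with hi0
  set i1 : {v : Fin n // P v = 0} → Fin 2 := fun _ => 1 with hi1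
  set j0 : {v : Fin n // P v = 1} → Fin 2 := fun _ => 0 with hj0
  set j1 : {v : Fin n // P v = 1} → Fin 2 := fun _ => 1 with hj1
  have hi : i0 ≠ i1 := by
    intro hc
    have := congrFun hc ⟨v0, hv0⟩
    simp [hi0, hi1] at this
  have hj : j0 ≠ j1 := by
    intro hc
    have := congrFun hc ⟨v1, hv1⟩
    simp [hj0, hj1] at this
  set x := (ρs 0 i0 i0).re
  set y := (ρs 0 i1 i1).re
  set u := (ρs 1 j0 j0).re
  set v := (ρs 1 j1 j1).re
  set z := ρs 0 i0 i1 with hzd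
  set w := ρs 1 j0 j1 with hwd
  have hx : 0 ≤ x := (psd_diag h0 i0).1
  have hy : 0 ≤ y := (psd_diag h0 i1).1
  have hu : 0 ≤ u := (psd_diag h1 j0).1
  have hv : 0 ≤ v := (psd_diag h1 j1).1
  have hnz : Complex.normSq z ≤ x * y := psd_entry h0 hi
  have hnw : Complex.normSq w ≤ u * v := psd_entry h1 hj
  have hxy : x + y ≤ 1 := psd_two_diag_le h0 t0 hi
  have huv : u + v ≤ 1 := psd_two_diag_le h1 t1 hj
  -- rewrite the trace
  rw [trace_ghz_mul hn, prodState_apply, prodState_apply, prodState_apply, prodState_apply]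
  have e00 : ρs 0 (fun v => (fun _ => (0 : Fin 2)) v.1) (fun v => (fun _ => (0 : Fin 2)) v.1) = ((x : ℝ) : ℂ) :=
    Complex.ext rfl (psd_diag h0 i0).2
  have e11 : ρs 0 (fun v => (fun _ => (1 : Fin 2)) v.1) (fun v => (fun _ => (1 : Fin 2)) v.1) = ((y : ℝ) : ℂ) :=
    Complex.ext rfl (psd_diag h0 i1).2
  have f00 : ρs 1 (fun v => (fun _ => (0 : Fin 2)) v.1) (fun v => (fun _ => (0 : Fin 2)) v.1) = ((u : ℝ) : ℂ) :=
    Complex.ext rfl (psd_diag h1 j0).2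
  have f11 : ρs 1 (fun v => (fun _ => (1 : Fin 2)) v.1) (fun v => (fun _ => (1 : Fin 2)) v.1) = ((v : ℝ) : ℂ) :=
    Complex.ext rfl (psd_diag h1 j1).2
  have e10 : ρs 0 (fun v => (fun _ => (1 : Fin 2)) v.1) (fun v => (fun _ => (0 : Fin 2)) v.1) = starRingEnd ℂ z := by
    rw [hzd]
    conv_lhs => rw [← h0.isHermitian]
    simp [Matrix.conjTranspose_apply]
    rfl
  have f10 : ρs 1 (fun v => (fun _ => (1 : Fin 2)) v.1) (fun v => (fun _ => (0 : Fin 2)) v.1) = starRingEnd ℂ w := by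
    rw [hwd]
    conv_lhs => rw [← h1.isHermitian]
    simp [Matrix.conjTranspose_apply]
    rfl
  rw [show (fun v : {v : Fin n // P v = 0} => (fun _ => (0 : Fin 2)) v.1) = i0 from rfl] at *
  rw [e00, e11, f00, f11, e10, f10]
  set s := (z * w).re with hs
  have hre : ((1/2 : ℂ) * (((x : ℝ):ℂ) * ((u : ℝ):ℂ) + z * w + starRingEnd ℂ z * starRingEnd ℂ w
      + ((y : ℝ):ℂ) * ((v : ℝ):ℂ))).re = (1/2) * (x * u + 2 * s + y * v) := by
    rw [← map_mul]
    simp [Complex.mul_re, Complex.add_re, Complex.add_im, Complex.conj_re, Complex.conj_im, hs]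
    ring
  rw [hre]
  have hs2 : s ^ 2 ≤ Complex.normSq z * Complex.normSq w := by
    have h1' : s ^ 2 ≤ Complex.normSq (z * w) := by
      rw [Complex.normSq_apply]
      nlinarith [sq_nonneg (z * w).im]
    rwa [Complex.normSq_mul] at h1'
  have hnz0 : 0 ≤ Complex.normSq z := Complex.normSq_nonneg z
  have hnw0 : 0 ≤ Complex.normSq w := Complex.normSq_nonneg w
  have hs4 : s ^ 2 ≤ (x * y) * (u * v) := by
    calc s ^ 2 ≤ Complex.normSq z * Complex.normSq w := hs2
    _ ≤ (x * y) * (u * v) := mul_le_mul hnz hnw hnw0 (mul_nonneg hx hy)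
  have hkey : 2 * s ≤ x * v + y * u := by
    have h4 : (2 * s) ^ 2 ≤ (x * v + y * u) ^ 2 := by
      nlinarith [sq_nonneg (x * v - y * u), hs4]
    have hpos : 0 ≤ x * v + y * u := by positivity
    nlinarith [h4, hpos]
  have hprod : (x + y) * (u + v) ≤ 1 :=
    mul_le_one₀ hxy (by linarith) huv
  nlinarith [hkey, hprod]

/-- **GHZ fidelity witness.** For any biseparable `n`-qubit state `ρ` (a convex mixture of
product states across bipartitions of the qubits into two nonempty groups), the fidelity
satisfies `⟨GHZ_n|ρ|GHZ_n⟩ ≤ 1/2`; consequently `W = (1/2)·1 − |GHZ_n⟩⟨GHZ_n|` satisfies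
`Tr(Wρ) ≥ 0`. -/
theorem stmt17 {n : ℕ}
    {ι : Type*} [Fintype ι] (p : ι → ℝ) (hp : ∀ m, 0 ≤ p m) (hp1 : ∑ m, p m = 1)
    (P : ι → Fin n → Fin 2) (hP : ∀ m, Function.Surjective (P m))
    (ρs : ∀ m, ∀ j : Fin 2,
      Matrix ({v : Fin n // P m v = j} → Fin 2) ({v : Fin n // P m v = j} → Fin 2) ℂ)
    (hρs : ∀ m j, (ρs m j).PosSemidef ∧ (ρs m j).trace = 1)
    (ρ : Matrix (Fin n → Fin 2) (Fin n → Fin 2) ℂ)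
    (hρ : ρ = ∑ m, ((p m : ℝ) : ℂ) • prodState (P m) (ρs m)) :
    ((ghzProj n * ρ).trace).re ≤ 1 / 2 ∧
      0 ≤ (((((1 : ℝ) / 2 : ℝ) : ℂ) • (1 : Matrix (Fin n → Fin 2) (Fin n → Fin 2) ℂ)
          - ghzProj n) * ρ).trace.re := by
  classical
  have hterm : ∀ m, ((ghzProj n * prodState (P m) (ρs m)).trace).re ≤ 1 / 2 := fun m =>
    key_term _ (hP m) _ (hρs m 0).1 (hρs m 0).2 (hρs m 1).1 (hρs m 1).2
  have htr1 : ∀ m, (prodState (P m) (ρs m)).trace = 1 := fun m => by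
    rw [prodState_trace, (hρs m 0).2, (hρs m 1).2, one_mul]
  have hGρ : (ghzProj n * ρ).trace
      = ∑ m, ((p m : ℝ) : ℂ) * (ghzProj n * prodState (P m) (ρs m)).trace := by
    rw [hρ, Matrix.mul_sum, Matrix.trace_sum]
    congr 1
    funext m
    rw [Matrix.mul_smul, Matrix.trace_smul, smul_eq_mul]
  have hre : ((ghzProj n * ρ).trace).re
      = ∑ m, p m * ((ghzProj n * prodState (P m) (ρs m)).trace).re := by
    rw [hGρ, Complex.re_sum]
    congr 1
    funext m
    simp [Complex.mul_re]
  have part1 : ((ghzProj n * ρ).trace).re ≤ 1 / 2 := by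
    rw [hre]
    calc ∑ m, p m * ((ghzProj n * prodState (P m) (ρs m)).trace).re
        ≤ ∑ m, p m * (1 / 2) :=
          Finset.sum_le_sum fun m _ => mul_le_mul_of_nonneg_left (hterm m) (hp m)
      _ = 1 / 2 := by rw [← Finset.sum_mul, hp1, one_mul]
  refine ⟨part1, ?_⟩
  have hρtr : ρ.trace = 1 := by
    rw [hρ, Matrix.trace_sum]
    have : ∀ m ∈ Finset.univ, (((p m : ℝ) : ℂ) • prodState (P m) (ρs m)).trace
        = ((p m : ℝ) : ℂ) := by
      intro m _
      rw [Matrix.trace_smul, htr1, smul_eq_mul, mul_one]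
    rw [Finset.sum_congr rfl this, ← Complex.ofReal_sum, hp1, Complex.ofReal_one]
  have hW : (((((1 : ℝ) / 2 : ℝ) : ℂ) • (1 : Matrix (Fin n → Fin 2) (Fin n → Fin 2) ℂ)
        - ghzProj n) * ρ).trace
      = (((1 : ℝ) / 2 : ℝ) : ℂ) - (ghzProj n * ρ).trace := by
    rw [Matrix.sub_mul, Matrix.smul_mul, one_mul, Matrix.trace_sub, Matrix.trace_smul,
      smul_eq_mul, hρtr, mul_one]
  rw [hW, Complex.sub_re, Complex.ofReal_re]
  linarith [part1]
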